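/- (Theorem 2) Suppose the number of computations C satisfies C ≤ ∑_{l=1}^∞ ∑_{m=1}^{⌊2^{lR_l}⌋} ∑_{θ=1}^∞ C_{l,m,θ} where C_{l,m,θ} ∈ {0,1} with P(C_{l,m,θ} = 1) ≤ (l+1) 2^{-r(θ-2)Δ} 2^{-rlc}, and the rate profile satisfies R_l ≤ rc - ε for all l with ε > 0. Then with Δ = 1/r, E[C] ≤ 4/(1 - 2^{-ε})². -/
import Mathlib


open MeasureTheory Finset

lemma ofReal_tsum_le' {g : ℕ → ℝ} (hg : ∀ n, 0 ≤ g n) :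
    ENNReal.ofReal (∑' n, g n) ≤ ∑' n, ENNReal.ofReal (g n) := by
  by_cases h : Summable g
  · rw [ENNReal.ofReal_tsum_of_nonneg hg h]
  · rw [tsum_eq_zero_of_not_summable h]; simp

lemma hasSum_aux {x : ℝ} (hx0 : 0 ≤ x) (hx1 : x < 1) :
    HasSum (fun l : ℕ => ((l : ℝ) + 2) * x ^ (l + 1)) (1 / (1 - x) ^ 2 - 1) := by
  have hx' : ‖x‖ < 1 := by rwa [Real.norm_eq_abs, abs_of_nonneg hx0]
  have hne : (1 : ℝ) - x ≠ 0 := by intro h; nlinarith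
  have h1 : HasSum (fun k : ℕ => ((k : ℝ) + 1) * x ^ k) (1 / (1 - x) ^ 2) := by
    have hs := (hasSum_coe_mul_geometric_of_norm_lt_one hx').add
      (hasSum_geometric_of_norm_lt_one hx')
    have hfun : (fun b : ℕ => (b : ℝ) * x ^ b + x ^ b)
        = fun k : ℕ => ((k : ℝ) + 1) * x ^ k := by funext k; ring
    have hval : x / (1 - x) ^ 2 + (1 - x)⁻¹ = 1 / (1 - x) ^ 2 := by
      field_simp; ring
    rwa [hfun, hval] at hs
  have key : (1 / (1 - x) ^ 2 - 1) + ∑ i ∈ Finset.range 1, ((i : ℝ) + 1) * x ^ i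
      = 1 / (1 - x) ^ 2 := by simp
  have h2 := (hasSum_nat_add_iff (f := fun k : ℕ => ((k : ℝ) + 1) * x ^ k) 1).mpr
    (by rw [key]; exact h1)
  have hfun2 : (fun n : ℕ => (((n + 1 : ℕ) : ℝ) + 1) * x ^ (n + 1))
      = fun l : ℕ => ((l : ℝ) + 2) * x ^ (l + 1) := by
    funext l; push_cast; ring
  rwa [hfun2] at h2


/-- Theorem 2: if `C ≤ ∑_{l≥1} ∑_{m < ⌊2^{lR_l}⌋} ∑_{θ≥1} C_{l,m,θ}` with Bernoulli
indicators satisfying `P(C_{l,m,θ} = 1) ≤ (l+1) 2^{-r(θ-2)Δ} 2^{-rlc}` and the rate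
profile satisfies `R_l ≤ rc - ε` with `ε > 0`, then with `Δ = 1/r` one has
`E[C] ≤ 4/(1 - 2^{-ε})²`. -/
theorem expected_computation_bound
    {Ω : Type*} [MeasurableSpace Ω] (μ : Measure Ω) [IsProbabilityMeasure μ]
    (r c ε Δ : ℝ) (hr : r ∈ Set.Ioo (0 : ℝ) 1) (hc : 0 < c) (hε : 0 < ε)
    (hΔ : Δ = 1 / r)
    (R : ℕ → ℝ) (hR0 : ∀ l, 0 ≤ R l) (hR : ∀ l, R l ≤ r * c - ε)
    (ind : ℕ → ℕ → ℕ → Ω → ℝ)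
    (hmeas : ∀ l m θ, Measurable (ind l m θ))
    (hval : ∀ l m θ ω, ind l m θ ω = 0 ∨ ind l m θ ω = 1)
    (hP : ∀ l m θ, 1 ≤ l → 1 ≤ θ →
      ∫ ω, ind l m θ ω ∂μ ≤
        ((l : ℝ) + 1) * (2 : ℝ) ^ (-r * ((θ : ℝ) - 2) * Δ) *
          (2 : ℝ) ^ (-r * (l : ℝ) * c))
    (C : Ω → ℝ) (hCint : Integrable C μ)
    (hC : ∀ ω, C ω ≤
      ∑' (l : ℕ) (θ : ℕ),
        ∑ m ∈ Finset.range (Nat.floor ((2 : ℝ) ^ (((l : ℝ) + 1) * R (l + 1)))),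
          ind (l + 1) m (θ + 1) ω) :
    ∫ ω, C ω ∂μ ≤ 4 / (1 - (2 : ℝ) ^ (-ε)) ^ 2 := by
  have hr0 : (0 : ℝ) < r := hr.1
  have hrne : r ≠ 0 := ne_of_gt hr0
  set x : ℝ := (2 : ℝ) ^ (-ε) with hxdef
  have hx0 : 0 < x := Real.rpow_pos_of_pos two_pos _
  have hx1 : x < 1 := Real.rpow_lt_one_of_one_lt_of_neg one_lt_two (by linarith)
  have hxne : (1 : ℝ) - x ≠ 0 := by intro h; nlinarith
  have htarget_pos : (0 : ℝ) < 4 / (1 - x) ^ 2 := by positivity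
  -- notation
  set N : ℕ → ℕ := fun l => Nat.floor ((2 : ℝ) ^ (((l : ℝ) + 1) * R (l + 1))) with hNdef
  set f : ℕ → ℕ → Ω → ℝ := fun l θ ω => ∑ m ∈ Finset.range (N l), ind (l + 1) m (θ + 1) ω
    with hfdef
  set b : ℕ → ℕ → ℝ :=
    fun l θ => (((l : ℝ) + 2) * x ^ (l + 1)) * (2 * (1 / 2 : ℝ) ^ θ) with hbdef
  have hind_nn : ∀ l m θ ω, 0 ≤ ind l m θ ω := by
    intro l m θ ω; rcases hval l m θ ω with h | h <;> simp [h]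
  have hf_nn : ∀ l θ ω, 0 ≤ f l θ ω := fun l θ ω =>
    Finset.sum_nonneg fun m _ => hind_nn _ _ _ _
  have hind_int : ∀ l m θ, Integrable (ind l m θ) μ := by
    intro l m θ
    refine Integrable.mono' (integrable_const (1 : ℝ)) (hmeas l m θ).aestronglyMeasurable ?_
    filter_upwards with ω
    rcases hval l m θ ω with h | h <;> simp [h]
  have hf_int : ∀ l θ, Integrable (f l θ) μ := fun l θ =>
    integrable_finset_sum _ fun m _ => hind_int _ _ _
  have hf_meas : ∀ l θ, Measurable (f l θ) := fun l θ =>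
    Finset.measurable_sum _ fun m _ => hmeas _ _ _
  have hb_nn : ∀ l θ, 0 ≤ b l θ := by
    intro l θ
    have : (0:ℝ) ≤ x ^ (l+1) := le_of_lt (pow_pos hx0 _)
    positivity
  -- key integral bound
  have hbound : ∀ l θ, ∫ ω, f l θ ω ∂μ ≤ b l θ := by
    intro l θ
    have hPm : ∀ m, ∫ ω, ind (l + 1) m (θ + 1) ω ∂μ ≤
        ((l : ℝ) + 2) * (2 : ℝ) ^ (-r * ((θ : ℝ) - 1) * Δ) *
          (2 : ℝ) ^ (-r * ((l : ℝ) + 1) * c) := by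
      intro m
      have := hP (l + 1) m (θ + 1) (Nat.le_add_left 1 l) (Nat.le_add_left 1 θ)
      push_cast at this
      convert this using 3 <;> push_cast <;> ring
    have h1 : ∫ ω, f l θ ω ∂μ = ∑ m ∈ Finset.range (N l), ∫ ω, ind (l+1) m (θ+1) ω ∂μ := by
      rw [hfdef]
      exact integral_finset_sum _ fun m _ => hind_int _ _ _
    set P : ℝ := ((l : ℝ) + 2) * (2 : ℝ) ^ (-r * ((θ : ℝ) - 1) * Δ) *
          (2 : ℝ) ^ (-r * ((l : ℝ) + 1) * c) with hPdef
    have hP_nn : 0 ≤ P := by positivity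
    have h2 : ∑ m ∈ Finset.range (N l), ∫ ω, ind (l+1) m (θ+1) ω ∂μ ≤ (N l : ℝ) * P := by
      have := Finset.sum_le_card_nsmul (Finset.range (N l))
        (fun m => ∫ ω, ind (l+1) m (θ+1) ω ∂μ) P (fun m _ => hPm m)
      simpa [nsmul_eq_mul] using this
    have hN : (N l : ℝ) ≤ (2 : ℝ) ^ (((l : ℝ) + 1) * (r * c - ε)) := by
      calc (N l : ℝ) ≤ (2 : ℝ) ^ (((l : ℝ) + 1) * R (l + 1)) :=
            Nat.floor_le (le_of_lt (Real.rpow_pos_of_pos two_pos _))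
        _ ≤ (2 : ℝ) ^ (((l : ℝ) + 1) * (r * c - ε)) := by
            apply Real.rpow_le_rpow_left_iff (x := (2:ℝ)) one_lt_two |>.mpr
            have hl1 : (0:ℝ) ≤ (l : ℝ) + 1 := by positivity
            exact mul_le_mul_of_nonneg_left (hR (l + 1)) hl1
    have h3 : (N l : ℝ) * P ≤ (2 : ℝ) ^ (((l : ℝ) + 1) * (r * c - ε)) * P :=
      mul_le_mul_of_nonneg_right hN hP_nn
    have h2' : ∀ a d : ℝ, (2:ℝ) ^ a * (2:ℝ) ^ d = (2:ℝ) ^ (a + d) :=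
      fun a d => (Real.rpow_add two_pos a d).symm
    have hkey : (2 : ℝ) ^ (((l : ℝ) + 1) * (r * c - ε)) * P = b l θ := by
      rw [hPdef, hbdef]
      have e1 : -r * ((θ : ℝ) - 1) * Δ = 1 + -(θ : ℝ) := by
        rw [hΔ]; field_simp; ring
      have e2 : ((l : ℝ) + 1) * (r * c - ε) + (-r * ((l : ℝ) + 1) * c)
          = -((l : ℝ) + 1) * ε := by ring
      calc (2 : ℝ) ^ (((l : ℝ) + 1) * (r * c - ε)) *
            (((l : ℝ) + 2) * (2 : ℝ) ^ (-r * ((θ : ℝ) - 1) * Δ) *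
              (2 : ℝ) ^ (-r * ((l : ℝ) + 1) * c))
          = ((l : ℝ) + 2) * ((2 : ℝ) ^ (((l : ℝ) + 1) * (r * c - ε)) *
              (2 : ℝ) ^ (-r * ((l : ℝ) + 1) * c)) *
              (2 : ℝ) ^ (-r * ((θ : ℝ) - 1) * Δ) := by ring
        _ = ((l : ℝ) + 2) * (2 : ℝ) ^ (-((l : ℝ) + 1) * ε) *
              (2 : ℝ) ^ (1 + -(θ : ℝ)) := by rw [h2', e2, e1]
        _ = ((l : ℝ) + 2) * (2 : ℝ) ^ (-((l : ℝ) + 1) * ε) *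
              ((2:ℝ) * (2 : ℝ) ^ (-(θ : ℝ))) := by
              rw [Real.rpow_add two_pos, Real.rpow_one]
        _ = (((l : ℝ) + 2) * x ^ (l + 1)) * (2 * (1 / 2 : ℝ) ^ θ) := by
              have e3 : (2 : ℝ) ^ (-((l : ℝ) + 1) * ε) = x ^ (l + 1) := by
                rw [hxdef, ← Real.rpow_natCast ((2:ℝ) ^ (-ε)) (l + 1),
                    ← Real.rpow_mul (by norm_num : (0:ℝ) ≤ 2)]
                congr 1
                push_cast; ring
              have e4 : (2 : ℝ) ^ (-(θ : ℝ)) = (1 / 2 : ℝ) ^ θ := by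
                rw [show (1/2 : ℝ) = (2:ℝ) ^ (-1 : ℝ) by
                      rw [Real.rpow_neg_one]; norm_num,
                    ← Real.rpow_natCast ((2:ℝ) ^ (-1:ℝ)) θ,
                    ← Real.rpow_mul (by norm_num : (0:ℝ) ≤ 2)]
                congr 1; ring
              rw [e3, e4]
      done
    calc ∫ ω, f l θ ω ∂μ = _ := h1
      _ ≤ (N l : ℝ) * P := h2
      _ ≤ (2 : ℝ) ^ (((l : ℝ) + 1) * (r * c - ε)) * P := h3
      _ = b l θ := hkey
  -- summability of b
  have hgeo : Summable (fun θ : ℕ => (1 / 2 : ℝ) ^ θ) :=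
    summable_geometric_of_lt_one (by norm_num) (by norm_num)
  have hb_sum_inner : ∀ l, Summable (fun θ => b l θ) := by
    intro l
    simpa [hbdef, mul_assoc] using (hgeo.mul_left 2).mul_left (((l : ℝ) + 2) * x ^ (l + 1))
  have hb_inner_val : ∀ l, ∑' θ, b l θ = (((l : ℝ) + 2) * x ^ (l + 1)) * 4 := by
    intro l
    rw [hbdef]
    rw [tsum_mul_left, tsum_mul_left, tsum_geometric_of_lt_one (by norm_num) (by norm_num)]
    norm_num
  have houter : HasSum (fun l : ℕ => (((l : ℝ) + 2) * x ^ (l + 1)) * 4)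
      ((1 / (1 - x) ^ 2 - 1) * 4) := (hasSum_aux (le_of_lt hx0) hx1).mul_right 4
  -- positive part of C
  set C' : Ω → ℝ := fun ω => max (C ω) 0 with hC'def
  have hC'int : Integrable C' μ := hCint.pos_part
  have hCC' : ∫ ω, C ω ∂μ ≤ ∫ ω, C' ω ∂μ :=
    integral_mono hCint hC'int fun ω => le_max_left _ _
  have hC'le : ∀ ω, C' ω ≤ ∑' (l : ℕ) (θ : ℕ), f l θ ω := by
    intro ω
    apply max_le (hC ω)
    exact tsum_nonneg fun l => tsum_nonneg fun θ => hf_nn l θ ω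
  -- ENNReal chain
  have step1 : ENNReal.ofReal (∫ ω, C' ω ∂μ) = ∫⁻ ω, ENNReal.ofReal (C' ω) ∂μ :=
    ofReal_integral_eq_lintegral_ofReal hC'int
      (Filter.Eventually.of_forall fun ω => le_max_right _ _)
  have step2 : ∫⁻ ω, ENNReal.ofReal (C' ω) ∂μ ≤
      ∫⁻ ω, ∑' (l : ℕ) (θ : ℕ), ENNReal.ofReal (f l θ ω) ∂μ := by
    apply lintegral_mono
    intro ω
    calc ENNReal.ofReal (C' ω) ≤ ENNReal.ofReal (∑' (l : ℕ) (θ : ℕ), f l θ ω) :=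
          ENNReal.ofReal_le_ofReal (hC'le ω)
      _ ≤ ∑' (l : ℕ), ENNReal.ofReal (∑' (θ : ℕ), f l θ ω) :=
          ofReal_tsum_le' fun l => tsum_nonneg fun θ => hf_nn l θ ω
      _ ≤ ∑' (l : ℕ) (θ : ℕ), ENNReal.ofReal (f l θ ω) :=
          ENNReal.tsum_le_tsum fun l => ofReal_tsum_le' fun θ => hf_nn l θ ω
  have step3 : ∫⁻ ω, ∑' (l : ℕ) (θ : ℕ), ENNReal.ofReal (f l θ ω) ∂μ =
      ∑' (l : ℕ) (θ : ℕ), ∫⁻ ω, ENNReal.ofReal (f l θ ω) ∂μ := by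
    rw [lintegral_tsum fun l =>
      (Measurable.ennreal_tsum fun θ => (hf_meas l θ).ennreal_ofReal).aemeasurable]
    exact tsum_congr fun l => lintegral_tsum fun θ => ((hf_meas l θ).ennreal_ofReal).aemeasurable
  have step4 : ∀ l θ, ∫⁻ ω, ENNReal.ofReal (f l θ ω) ∂μ ≤ ENNReal.ofReal (b l θ) := by
    intro l θ
    rw [← ofReal_integral_eq_lintegral_ofReal (hf_int l θ)
      (Filter.Eventually.of_forall fun ω => hf_nn l θ ω)]
    exact ENNReal.ofReal_le_ofReal (hbound l θ)
  have step5 : ∑' (l : ℕ) (θ : ℕ), ENNReal.ofReal (b l θ) ≤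
      ENNReal.ofReal (4 / (1 - x) ^ 2) := by
    have hinner : ∀ l, ∑' θ, ENNReal.ofReal (b l θ)
        = ENNReal.ofReal ((((l : ℝ) + 2) * x ^ (l + 1)) * 4) := by
      intro l
      rw [← ENNReal.ofReal_tsum_of_nonneg (hb_nn l) (hb_sum_inner l), hb_inner_val l]
    calc ∑' (l : ℕ) (θ : ℕ), ENNReal.ofReal (b l θ)
        = ∑' (l : ℕ), ENNReal.ofReal ((((l : ℝ) + 2) * x ^ (l + 1)) * 4) :=
          tsum_congr hinner
      _ = ENNReal.ofReal ((1 / (1 - x) ^ 2 - 1) * 4) := by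
          rw [← ENNReal.ofReal_tsum_of_nonneg
            (fun l => by positivity) houter.summable, houter.tsum_eq]
      _ ≤ ENNReal.ofReal (4 / (1 - x) ^ 2) := by
          apply ENNReal.ofReal_le_ofReal
          have heq : 4 / (1 - x) ^ 2 = (1 / (1 - x) ^ 2) * 4 := by ring
          linarith [heq]
  have chain : ENNReal.ofReal (∫ ω, C' ω ∂μ) ≤ ENNReal.ofReal (4 / (1 - x) ^ 2) := by
    rw [step1]
    calc ∫⁻ ω, ENNReal.ofReal (C' ω) ∂μ ≤ _ := step2
      _ = _ := step3
      _ ≤ ∑' (l : ℕ) (θ : ℕ), ENNReal.ofReal (b l θ) :=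
          ENNReal.tsum_le_tsum fun l => ENNReal.tsum_le_tsum fun θ => step4 l θ
      _ ≤ _ := step5
  have hC'bound : ∫ ω, C' ω ∂μ ≤ 4 / (1 - x) ^ 2 := by
    have h0 : 0 ≤ ∫ ω, C' ω ∂μ := integral_nonneg fun ω => le_max_right _ _
    exact (ENNReal.ofReal_le_ofReal_iff (le_of_lt htarget_pos)).mp chain
  linarith
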